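/- For a full row rank matrix Z ∈ ℝ^{n×m}, the Lebesgue volume of the zonotope C(Z) = {∑_{i=1}^m c_i z_i : c_i ∈ [0,1]} equals ∑ over all n-element subsets {i₁<⋯<iₙ} of {1,…,m} of |det[z_{i₁}, …, z_{iₙ}]|. -/

import Mathlib

open MeasureTheory Set Finset

noncomputable section ZonoAux

/-- The zonotope generated by the columns `v`. -/
def zono {n m : ℕ} (v : Fin m → Fin n → ℝ) : Set (Fin n → ℝ) :=
  {x | ∃ c : Fin m → ℝ, (∀ i, c i ∈ Set.Icc (0 : ℝ) 1) ∧ x = ∑ i, c i • v i}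

/-- Absolute value of the determinant of the columns of `v` indexed by `s`. -/
def dAbs {n m : ℕ} (v : Fin m → Fin n → ℝ) (s : Finset (Fin m)) : ℝ :=
  if h : s.card = n then
    |Matrix.det (Matrix.of fun i j : Fin n => v (s.orderIsoOfFin h j) i)| else 0

def minorSum (n : ℕ) {m : ℕ} (v : Fin m → Fin n → ℝ) : ENNReal :=
  ∑ s ∈ (Finset.univ : Finset (Fin m)).powersetCard n, ENNReal.ofReal (dAbs v s)

lemma dAbs_nonneg {n m : ℕ} (v : Fin m → Fin n → ℝ) (s : Finset (Fin m)) : 0 ≤ dAbs v s := by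
  unfold dAbs; split <;> positivity

/-- `dAbs` can be computed from any injective enumeration of `s`. -/
lemma dAbs_eq_of_inj {n m : ℕ} (v : Fin m → Fin n → ℝ) (s : Finset (Fin m))
    (h : s.card = n) (e : Fin n → Fin m) (he : Function.Injective e)
    (hes : ∀ j, e j ∈ s) :
    dAbs v s = |Matrix.det (Matrix.of fun i j : Fin n => v (e j) i)| := by
  rw [dAbs, dif_pos h]
  have hcard : Fintype.card {x // x ∈ s} = n := by simp [Fintype.card_coe, h]
  set e' : Fin n → {x // x ∈ s} := fun j => ⟨e j, hes j⟩ with he'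
  have hinj : Function.Injective e' := fun a b hab => he (congrArg Subtype.val hab)
  have hbij : Function.Bijective e' := by
    rw [Fintype.bijective_iff_injective_and_card]; simp [hinj, hcard]
  set σ : Equiv.Perm (Fin n) :=
    (Equiv.ofBijective e' hbij).trans (s.orderIsoOfFin h).toEquiv.symm with hσ
  have key : ∀ j, e j = s.orderIsoOfFin h (σ j) := by
    intro j
    have : s.orderIsoOfFin h (σ j) = e' j := by
      simp [hσ, Equiv.ofBijective]
    rw [this]
  have hmat : (Matrix.of fun i j : Fin n => v (e j) i)
      = (Matrix.of fun i j : Fin n => v (s.orderIsoOfFin h j) i).submatrix id σ := by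
    ext i j; simp [key j]
  rw [hmat, Matrix.det_permute', abs_mul, abs_unit_intCast, one_mul]

/-- The linear map sending coefficients to the combination `∑ cᵢ • vᵢ`. -/
def zonoMap {n m : ℕ} (v : Fin m → Fin n → ℝ) : (Fin m → ℝ) →ₗ[ℝ] (Fin n → ℝ) where
  toFun c := ∑ i, c i • v i
  map_add' c d := by simp [add_smul, Finset.sum_add_distrib]
  map_smul' a c := by simp [smul_smul, Finset.smul_sum]

lemma zono_eq_image {n m : ℕ} (v : Fin m → Fin n → ℝ) :
    zono v = zonoMap v '' (Set.univ.pi fun _ : Fin m => Set.Icc (0:ℝ) 1) := by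
  ext x
  simp only [zono, Set.mem_setOf_eq, Set.mem_image, Set.mem_pi, Set.mem_univ, forall_true_left,
    zonoMap, LinearMap.coe_mk, AddHom.coe_mk]
  constructor
  · rintro ⟨c, hc, rfl⟩; exact ⟨c, fun i => hc i, rfl⟩
  · rintro ⟨c, hc, rfl⟩; exact ⟨c, fun i => hc i, rfl⟩

lemma zono_isCompact {n m : ℕ} (v : Fin m → Fin n → ℝ) : IsCompact (zono v) := by
  rw [zono_eq_image]
  exact (isCompact_univ_pi fun _ => isCompact_Icc).image
    ((zonoMap v).continuous_of_finiteDimensional)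

lemma zono_convex {n m : ℕ} (v : Fin m → Fin n → ℝ) : Convex ℝ (zono v) := by
  rw [zono_eq_image]
  exact (convex_pi fun _ _ => convex_Icc 0 1).linear_image (zonoMap v)

lemma zono_image {n n' m : ℕ} (v : Fin m → Fin n → ℝ) (L : (Fin n → ℝ) →ₗ[ℝ] (Fin n' → ℝ)) :
    L '' zono v = zono (fun i => L (v i)) := by
  ext x
  simp only [zono, Set.mem_image, Set.mem_setOf_eq]
  constructor
  · rintro ⟨y, ⟨c, hc, rfl⟩, rfl⟩
    exact ⟨c, hc, by simp [map_sum]⟩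
  · rintro ⟨c, hc, rfl⟩
    exact ⟨∑ i, c i • v i, ⟨c, hc, rfl⟩, by simp [map_sum]⟩

/-- n = 0 case. -/
lemma zono_volume_zero {m : ℕ} (v : Fin m → Fin 0 → ℝ) :
    volume (zono v) = minorSum 0 v := by
  have hset : zono v = Set.univ := by
    refine Set.eq_univ_of_forall fun x => ⟨0, fun i => ⟨le_refl 0, zero_le_one⟩, ?_⟩
    exact Subsingleton.elim _ _
  have h1 : (volume : Measure (Fin 0 → ℝ)) Set.univ = 1 := by
    rw [MeasureTheory.volume_pi, MeasureTheory.Measure.pi_univ]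
    simp
  rw [hset, h1, minorSum, Finset.powersetCard_zero, Finset.sum_singleton,
    dAbs, dif_pos (Finset.card_empty)]
  simp [Matrix.det_isEmpty]

/-- degenerate case : m = 0, n > 0. -/
lemma zono_volume_deg {n m : ℕ} (hnm : m < n) (v : Fin m → Fin n → ℝ) :
    volume (zono v) = minorSum n v := by
  have hvol : volume (zono v) = 0 := by
    have hne : LinearMap.range (zonoMap v) ≠ ⊤ := by
      intro htop
      have h1 : Module.finrank ℝ (LinearMap.range (zonoMap v)) ≤ m := by
        simpa using LinearMap.finrank_range_le (zonoMap v)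
      rw [htop, finrank_top] at h1
      simp [Module.finrank_pi] at h1
      omega
    refine measure_mono_null ?_ (Measure.addHaar_submodule volume (LinearMap.range (zonoMap v)) hne)
    rw [zono_eq_image]
    exact (Set.image_subset_range _ _).trans (by rw [LinearMap.coe_range])
  have hsum : minorSum n v = 0 := by
    rw [minorSum, Finset.powersetCard_eq_empty.mpr (by simpa using hnm), Finset.sum_empty]
  rw [hvol, hsum]

/-- Core geometric lemma: adding a segment in the last coordinate direction. -/
lemma vol_add_seg {n' : ℕ} (A : Set (Fin (n' + 1) → ℝ)) (hA : IsCompact A) (hconv : Convex ℝ A) :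
    volume {x | ∃ a ∈ A, ∃ t ∈ Set.Icc (0:ℝ) 1,
        x = a + t • (Pi.single (Fin.last n') (1:ℝ) : Fin (n'+1) → ℝ)} =
      volume A + volume ((fun x : Fin (n' + 1) → ℝ => x ∘ Fin.castSucc) '' A) := by
  classical
  set e₀ : Fin (n'+1) → ℝ := Pi.single (Fin.last n') (1:ℝ) with he₀
  set proj : (Fin (n'+1) → ℝ) → (Fin n' → ℝ) := fun x => x ∘ Fin.castSucc with hproj
  set B : Set (Fin (n'+1) → ℝ) := {x | ∃ a ∈ A, ∃ t ∈ Set.Icc (0:ℝ) 1, x = a + t • e₀} with hB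
  have hprojcont : Continuous proj := continuous_pi fun j => continuous_apply _
  have hBc : IsCompact B := by
    have hBeq : B = (fun p : (Fin (n'+1) → ℝ) × ℝ => p.1 + p.2 • e₀) '' (A ×ˢ Set.Icc 0 1) := by
      ext x
      simp only [hB, Set.mem_image, Set.mem_prod, Set.mem_setOf_eq, Prod.exists]
      constructor
      · rintro ⟨a, ha, t, ht, rfl⟩; exact ⟨a, t, ⟨ha, ht⟩, rfl⟩
      · rintro ⟨a, t, ⟨ha, ht⟩, rfl⟩; exact ⟨a, ha, t, ht, rfl⟩
    rw [hBeq]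
    exact (hA.prod isCompact_Icc).image (continuous_fst.add (continuous_snd.smul continuous_const))
  have hAm : MeasurableSet A := hA.measurableSet
  have hBm : MeasurableSet B := hBc.measurableSet
  have hPm : MeasurableSet (proj '' A) := (hA.image hprojcont).measurableSet
  set ψ := MeasurableEquiv.piFinSuccAbove (fun _ : Fin (n'+1) => ℝ) (Fin.last n') with hψdef
  have hψ : MeasurePreserving ψ volume volume :=
    MeasureTheory.volume_preserving_piFinSuccAbove (fun _ : Fin (n'+1) => ℝ) (Fin.last n')
  have φeq : ∀ (t : ℝ) (y : Fin n' → ℝ), ψ.symm (t, y) = Fin.insertNth (Fin.last n') t y := by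
    intro t y; rfl
  -- slicing formula
  have key : ∀ S : Set (Fin (n'+1) → ℝ), MeasurableSet S →
      volume S = ∫⁻ y, volume {t : ℝ | Fin.insertNth (Fin.last n') t y ∈ S}
        ∂(volume : Measure (Fin n' → ℝ)) := by
    intro S hS
    have h1 : volume S = ((volume : Measure ℝ).prod volume) (ψ.symm ⁻¹' S) := by
      rw [← Measure.volume_eq_prod]
      exact ((MeasurePreserving.symm _ hψ).measure_preimage hS.nullMeasurableSet).symm
    rw [h1, Measure.prod_apply_symm (ψ.symm.measurable hS)]
    refine lintegral_congr fun y => ?_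
    congr 1
  -- fibers of A
  set F : (Fin n' → ℝ) → Set ℝ := fun y => {t | Fin.insertNth (Fin.last n') t y ∈ A} with hF
  have hins : ∀ (y : Fin n' → ℝ) (u τ : ℝ),
      Fin.insertNth (Fin.last n') u y + τ • e₀ = Fin.insertNth (Fin.last n') (u + τ) y := by
    intro y u τ
    funext j
    induction j using Fin.lastCases with
    | last => simp [he₀, Fin.insertNth_apply_same]
    | cast j =>
      rw [← Fin.succAbove_last (n := n')]
      simp [he₀, Fin.insertNth_apply_succAbove, Pi.single_apply,
        (Fin.castSucc_lt_last j).ne, Fin.succAbove_last]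
  have hprojins : ∀ (y : Fin n' → ℝ) (t : ℝ), proj (Fin.insertNth (Fin.last n') t y) = y := by
    intro y t
    funext j
    simp only [hproj, Function.comp_apply]
    rw [← Fin.succAbove_last (n := n')]
    simp [Fin.insertNth_apply_succAbove]
  have hFne : ∀ y, (F y).Nonempty ↔ y ∈ proj '' A := by
    intro y
    constructor
    · rintro ⟨t, ht⟩
      exact ⟨Fin.insertNth (Fin.last n') t y, ht, hprojins y t⟩
    · rintro ⟨x, hx, rfl⟩
      refine ⟨x (Fin.last n'), ?_⟩
      have : Fin.insertNth (Fin.last n') (x (Fin.last n')) (proj x) = x := by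
        have h2 : proj x = Fin.removeNth (Fin.last n') x := by
          funext j
          show x (Fin.castSucc j) = x (Fin.succAbove (Fin.last n') j)
          rw [Fin.succAbove_last]
        rw [h2, Fin.insertNth_self_removeNth]
      show Fin.insertNth (Fin.last n') (x (Fin.last n')) (proj x) ∈ A
      rw [this]; exact hx
  have hFconv : ∀ y, Convex ℝ (F y) := by
    intro y u hu v hv α β hα hβ hαβ
    show Fin.insertNth (Fin.last n') (α * u + β * v) y ∈ A
    have : Fin.insertNth (Fin.last n') (α * u + β * v) y
        = (α • (Fin.insertNth (Fin.last n') u y : Fin (n'+1) → ℝ)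
          + β • (Fin.insertNth (Fin.last n') v y : Fin (n'+1) → ℝ) : Fin (n'+1) → ℝ) := by
      funext j
      induction j using Fin.lastCases with
      | last => simp [Fin.insertNth_apply_same]
      | cast j =>
        rw [← Fin.succAbove_last (n := n')]
        simp only [Pi.add_apply, Pi.smul_apply, Fin.insertNth_apply_succAbove, smul_eq_mul]
        rw [← add_mul, hαβ, one_mul]
    rw [this]
    exact hconv hu hv hα hβ hαβ
  have hinscont : ∀ y : Fin n' → ℝ, Continuous fun t : ℝ =>
      (Fin.insertNth (Fin.last n') t y : Fin (n'+1) → ℝ) := by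
    intro y
    refine continuous_pi fun j => ?_
    induction j using Fin.lastCases with
    | last => simpa [Fin.insertNth_apply_same] using continuous_id'
    | cast j =>
      rw [← Fin.succAbove_last (n := n')]
      simpa [Fin.insertNth_apply_succAbove] using continuous_const
  have hFcomp : ∀ y, IsCompact (F y) := by
    intro y
    have hclosed : IsClosed (F y) := hA.isClosed.preimage (hinscont y)
    refine IsCompact.of_isClosed_subset (hA.image (continuous_apply (Fin.last n'))) hclosed ?_
    intro t ht
    refine ⟨Fin.insertNth (Fin.last n') t y, ht, ?_⟩
    simp [Fin.insertNth_apply_same]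
  -- fiber of B over y in terms of fiber of A
  have hmem_fiberB : ∀ (y : Fin n' → ℝ) (s : ℝ),
      (Fin.insertNth (Fin.last n') s y ∈ B) ↔ ∃ u ∈ F y, ∃ τ ∈ Set.Icc (0:ℝ) 1, s = u + τ := by
    intro y s
    constructor
    · rintro ⟨a, ha, τ, hτ, heq⟩
      refine ⟨s - τ, ?_, τ, hτ, by ring⟩
      have h3 := hins y (s - τ) τ
      rw [sub_add_cancel] at h3
      rw [← h3] at heq
      have h4 : Fin.insertNth (Fin.last n') (s - τ) y = a := add_right_cancel heq
      show Fin.insertNth (Fin.last n') (s - τ) y ∈ A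
      rw [h4]; exact ha
    · rintro ⟨u, hu, τ, hτ, rfl⟩
      exact ⟨Fin.insertNth (Fin.last n') u y, hu, τ, hτ, (hins y u τ).symm⟩
  -- the pointwise volume identity
  have main : ∀ y, volume {t : ℝ | Fin.insertNth (Fin.last n') t y ∈ B}
      = volume (F y) + (proj '' A).indicator (fun _ => (1:ENNReal)) y := by
    intro y
    by_cases hy : (F y).Nonempty
    · have hymem : y ∈ proj '' A := (hFne y).mp hy
      have hIcc : F y = Set.Icc (sInf (F y)) (sSup (F y)) :=
        eq_Icc_of_connected_compact ⟨hy, (hFconv y).isPreconnected⟩ (hFcomp y)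
      set a := sInf (F y)
      set b := sSup (F y)
      have hab : a ≤ b := by
        obtain ⟨t, ht⟩ := hy
        exact le_trans (csInf_le (hFcomp y).bddBelow ht) (le_csSup (hFcomp y).bddAbove ht)
      have hfib : {t : ℝ | Fin.insertNth (Fin.last n') t y ∈ B} = Set.Icc a (b + 1) := by
        ext s
        rw [Set.mem_setOf_eq, hmem_fiberB y s]
        constructor
        · rintro ⟨u, hu, τ, hτ, rfl⟩
          rw [hIcc] at hu
          exact ⟨le_add_of_le_of_nonneg hu.1 hτ.1, add_le_add hu.2 hτ.2⟩
        · intro hs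
          refine ⟨min s b, ?_, s - min s b, ⟨?_, ?_⟩, by ring⟩
          · rw [hIcc]; exact ⟨le_min hs.1 hab, min_le_right _ _⟩
          · simp [min_le_left]
          · rcases le_total s b with h | h
            · simp [min_eq_left h]
            · rw [min_eq_right h]; linarith [hs.2]
      rw [hfib, Set.indicator_of_mem hymem, hIcc, Real.volume_Icc, Real.volume_Icc,
        show b + 1 - a = (b - a) + 1 by ring,
        ENNReal.ofReal_add (by linarith) zero_le_one, ENNReal.ofReal_one]
    · have hyn : y ∉ proj '' A := fun h => hy ((hFne y).mpr h)
      have hFempty : F y = ∅ := Set.not_nonempty_iff_eq_empty.mp hy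
      have hfib : {t : ℝ | Fin.insertNth (Fin.last n') t y ∈ B} = ∅ := by
        ext s
        simp only [Set.mem_setOf_eq, Set.mem_empty_iff_false, iff_false]
        intro hsB
        rcases (hmem_fiberB y s).mp hsB with ⟨u, hu, -⟩
        rw [hFempty] at hu
        exact hu
      rw [hfib, hFempty, Set.indicator_of_notMem hyn]
      simp
  have hmeasF : Measurable fun y => volume (F y) := by
    have h0 : Measurable fun y : Fin n' → ℝ =>
        (volume : Measure ℝ) ((fun t => (t, y)) ⁻¹' (ψ.symm ⁻¹' A)) :=
      measurable_measure_prodMk_right (ψ.symm.measurable hAm)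
    have hsets : (fun y => volume (F y))
        = fun y : Fin n' → ℝ => (volume : Measure ℝ) ((fun t => (t, y)) ⁻¹' (ψ.symm ⁻¹' A)) := by
      funext y
      congr 1
    rw [hsets]
    exact h0
  have keyA : volume A = ∫⁻ y, volume (F y) ∂(volume : Measure (Fin n' → ℝ)) := key A hAm
  have hind : (∫⁻ y, (proj '' A).indicator (fun _ => (1:ENNReal)) y
      ∂(volume : Measure (Fin n' → ℝ))) = volume (proj '' A) := by
    exact MeasureTheory.lintegral_indicator_one (μ := volume) hPm
  calc volume B
      = ∫⁻ y, (volume (F y) + (proj '' A).indicator (fun _ => (1:ENNReal)) y) ∂volume := by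
        rw [key B hBm]; exact lintegral_congr main
    _ = (∫⁻ y, volume (F y) ∂volume)
        + ∫⁻ y, (proj '' A).indicator (fun _ => (1:ENNReal)) y ∂volume :=
        lintegral_add_left hmeasF _
    _ = volume A + volume (proj '' A) := by rw [← keyA, hind]


/-- second sum: subsets of card n' together with the extra vector w. -/
def dAbs' {n' m : ℕ} (u : Fin m → Fin (n' + 1) → ℝ) (w : Fin (n' + 1) → ℝ)
    (t : Finset (Fin m)) : ℝ :=
  if h : t.card = n' then
    |Matrix.det (Matrix.of fun i j : Fin (n' + 1) =>
      (Fin.snoc (fun j' : Fin n' => u (t.orderIsoOfFin h j')) w : Fin (n'+1) → Fin (n'+1) → ℝ) j i)|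
  else 0

/-- Combinatorial splitting of the minor sum according to whether the last column is used. -/
lemma minorSum_split {n' m : ℕ} (v : Fin (m + 1) → Fin (n' + 1) → ℝ) :
    minorSum (n' + 1) v = minorSum (n' + 1) (v ∘ Fin.castSucc) +
      ∑ t ∈ (Finset.univ : Finset (Fin m)).powersetCard n',
        ENNReal.ofReal (dAbs' (v ∘ Fin.castSucc) (v (Fin.last m)) t) := by
  classical
  have hlast : Fin.last m ∉ (Finset.univ : Finset (Fin m)).map Fin.castSuccEmb := by
    simp only [Finset.mem_map, Finset.mem_univ, true_and, not_exists]
    intro j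
    exact (Fin.castSucc_lt_last j).ne
  have huniv : (Finset.univ : Finset (Fin (m + 1)))
      = insert (Fin.last m) ((Finset.univ : Finset (Fin m)).map Fin.castSuccEmb) := by
    ext i
    simp only [Finset.mem_univ, true_iff, Finset.mem_insert, Finset.mem_map, Finset.mem_univ,
      true_and]
    rcases Fin.eq_castSucc_or_eq_last i with ⟨j, rfl⟩ | rfl
    · exact Or.inr ⟨j, rfl⟩
    · exact Or.inl rfl
  have hdisj : Disjoint
      (Finset.powersetCard (n' + 1) ((Finset.univ : Finset (Fin m)).map Fin.castSuccEmb))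
      ((Finset.powersetCard n' ((Finset.univ : Finset (Fin m)).map Fin.castSuccEmb)).image
        (insert (Fin.last m))) := by
    rw [Finset.disjoint_left]
    intro s hs hs'
    rcases Finset.mem_image.mp hs' with ⟨t, _, rfl⟩
    exact hlast ((Finset.mem_powersetCard.mp hs).1 (Finset.mem_insert_self _ _))
  rw [minorSum, huniv, Finset.powersetCard_succ_insert hlast, Finset.sum_union hdisj]
  congr 1
  · -- first part
    rw [Finset.powersetCard_map, Finset.sum_map, minorSum]
    simp only [RelEmbedding.coe_toEmbedding, Finset.mapEmbedding_apply]
    refine Finset.sum_congr rfl fun t ht => ?_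
    have htc : t.card = n' + 1 := (Finset.mem_powersetCard.mp ht).2
    congr 1
    rw [dAbs_eq_of_inj v _ (by simp [htc])
      (fun j => Fin.castSucc (t.orderIsoOfFin htc j))
      (fun a b hab => (t.orderIsoOfFin htc).injective
        (Subtype.ext (Fin.castSucc_injective _ hab)))
      (fun j => Finset.mem_map_of_mem Fin.castSuccEmb (t.orderIsoOfFin htc j).2)]
    rw [dAbs, dif_pos htc]
    rfl
  · -- second part
    rw [Finset.sum_image, Finset.powersetCard_map, Finset.sum_map]
    · simp only [RelEmbedding.coe_toEmbedding, Finset.mapEmbedding_apply]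
      refine Finset.sum_congr rfl fun t ht => ?_
      have htc : t.card = n' := (Finset.mem_powersetCard.mp ht).2
      have hln : Fin.last m ∉ t.map Fin.castSuccEmb := by
        simp only [Finset.mem_map]
        rintro ⟨j, -, hj⟩
        exact (Fin.castSucc_lt_last j).ne (by simpa using hj)
      have hcard : (insert (Fin.last m) (t.map Fin.castSuccEmb)).card = n' + 1 := by
        rw [Finset.card_insert_of_notMem hln, Finset.card_map, htc]
      set e : Fin (n' + 1) → Fin (m + 1) :=
        Fin.snoc (fun j => Fin.castSucc (t.orderIsoOfFin htc j)) (Fin.last m) with he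
      have hinj : Function.Injective e := by
        intro a b hab
        induction a using Fin.lastCases with
        | last =>
          induction b using Fin.lastCases with
          | last => rfl
          | cast b =>
            rw [he] at hab
            simp only [Fin.snoc_last, Fin.snoc_castSucc] at hab
            exact absurd hab.symm (Fin.castSucc_lt_last _).ne
        | cast a =>
          induction b using Fin.lastCases with
          | last =>
            rw [he] at hab
            simp only [Fin.snoc_last, Fin.snoc_castSucc] at hab
            exact absurd hab (Fin.castSucc_lt_last _).ne
          | cast b =>
            rw [he] at hab
            simp only [Fin.snoc_castSucc] at hab
            have := (t.orderIsoOfFin htc).injective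
              (Subtype.ext (Fin.castSucc_injective _ hab))
            rw [this]
      have hmem : ∀ j, e j ∈ insert (Fin.last m) (t.map Fin.castSuccEmb) := by
        intro j
        induction j using Fin.lastCases with
        | last => simp [he]
        | cast j =>
          rw [he]
          simp only [Fin.snoc_castSucc]
          exact Finset.mem_insert_of_mem
            (Finset.mem_map_of_mem Fin.castSuccEmb (t.orderIsoOfFin htc j).2)
      congr 1
      rw [dAbs_eq_of_inj v _ hcard e hinj hmem, dAbs', dif_pos htc]
      congr 1
      congr 1
      ext i j
      induction j using Fin.lastCases with
      | last => simp [he, Fin.snoc_last]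
      | cast j => simp [he, Fin.snoc_castSucc]
    · intro a ha b hb hab
      have h1 : a = (insert (Fin.last m) a).erase (Fin.last m) := by
        rw [Finset.erase_insert]
        intro hla
        exact hlast ((Finset.mem_powersetCard.mp ha).1 hla)
      have h2 : b = (insert (Fin.last m) b).erase (Fin.last m) := by
        rw [Finset.erase_insert]
        intro hlb
        exact hlast ((Finset.mem_powersetCard.mp hb).1 hlb)
      rw [h1, h2, hab]


/-- determinant identity after transforming `w` to `eₙ` and projecting. -/
lemma dAbs_proj {n' m : ℕ} (u : Fin m → Fin (n' + 1) → ℝ) (w : Fin (n' + 1) → ℝ)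
    (T : (Fin (n' + 1) → ℝ) ≃ₗ[ℝ] (Fin (n' + 1) → ℝ))
    (hTw : T w = (Pi.single (Fin.last n') 1 : Fin (n'+1) → ℝ)) (t : Finset (Fin m)) (ht : t.card = n') :
    dAbs (fun i => (T (u i)) ∘ Fin.castSucc) t
      = |LinearMap.det (T : (Fin (n' + 1) → ℝ) →ₗ[ℝ] (Fin (n' + 1) → ℝ))| * dAbs' u w t := by
  unfold dAbs dAbs'
  rw [dif_pos ht, dif_pos ht]
  set Tm : Matrix (Fin (n' + 1)) (Fin (n' + 1)) ℝ :=
    LinearMap.toMatrix' (T : (Fin (n' + 1) → ℝ) →ₗ[ℝ] (Fin (n' + 1) → ℝ)) with hTm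
  have hdetT : LinearMap.det (T : (Fin (n' + 1) → ℝ) →ₗ[ℝ] (Fin (n' + 1) → ℝ)) = Tm.det := by
    rw [hTm, LinearMap.det_toMatrix']
  have hTlin : Matrix.toLin' Tm = (T : (Fin (n' + 1) → ℝ) →ₗ[ℝ] (Fin (n' + 1) → ℝ)) :=
    Matrix.toLin'_toMatrix' _
  have hTapp : ∀ x : Fin (n' + 1) → ℝ, T x = Tm.mulVec x := by
    intro x
    calc T x = (T : (Fin (n' + 1) → ℝ) →ₗ[ℝ] (Fin (n' + 1) → ℝ)) x := rfl
      _ = Matrix.toLin' Tm x := by rw [hTlin]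
      _ = Tm.mulVec x := Matrix.toLin'_apply _ _
  set M : Matrix (Fin (n' + 1)) (Fin (n' + 1)) ℝ :=
    Matrix.of fun i j : Fin (n' + 1) =>
      (Fin.snoc (fun j' : Fin n' => u (t.orderIsoOfFin ht j')) w : Fin (n'+1) → Fin (n'+1) → ℝ) j i
    with hM
  set Q : Matrix (Fin (n' + 1)) (Fin (n' + 1)) ℝ := Tm * M with hQ
  -- Q's columns are T applied to M's columns
  have hQcol : ∀ i j, Q i j
      = T ((Fin.snoc (fun j' : Fin n' => u (t.orderIsoOfFin ht j')) w : Fin (n'+1) → Fin (n'+1) → ℝ) j) i := by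
    intro i j
    rw [hTapp]
    simp [hQ, hM, Matrix.mul_apply, Matrix.mulVec, dotProduct]
  -- the last column of Q is `Pi.single last 1`
  have hQlast : ∀ i, Q i (Fin.last n') = (Pi.single (Fin.last n') 1 : Fin (n'+1) → ℝ) i := by
    intro i
    rw [hQcol]
    simp [Fin.snoc_last, hTw]
  -- cofactor expansion of Q along the last column
  have hexp : Q.det = (Q.submatrix (Fin.last n').succAbove (Fin.last n').succAbove).det := by
    rw [Matrix.det_succ_column Q (Fin.last n')]
    rw [Finset.sum_eq_single (Fin.last n')]
    · have heven : Even (((Fin.last n' : Fin (n'+1)) : ℕ) + ((Fin.last n' : Fin (n'+1)) : ℕ)) :=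
        ⟨n', by simp [Fin.val_last]⟩
      rw [hQlast]
      simp [heven.neg_one_pow]
    · intro i _ hi
      rw [hQlast]
      simp [Pi.single_apply, hi]
    · simp
  have hsub : (Q.submatrix (Fin.last n').succAbove (Fin.last n').succAbove)
      = Matrix.of fun i j : Fin n' => ((T (u (t.orderIsoOfFin ht j))) ∘ Fin.castSucc) i := by
    ext i j
    simp only [Matrix.submatrix_apply, Fin.succAbove_last]
    rw [hQcol]
    simp [Fin.snoc_castSucc]
  calc |Matrix.det (Matrix.of fun i j : Fin n' => ((T (u (t.orderIsoOfFin ht j))) ∘ Fin.castSucc) i)|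
      = |Q.det| := by rw [hexp, hsub]
    _ = |Tm.det * M.det| := by rw [hQ, Matrix.det_mul]
    _ = _ := by rw [abs_mul, hdetT]


theorem zono_volume_main : ∀ (m n : ℕ) (v : Fin m → Fin n → ℝ),
    volume (zono v) = minorSum n v := by
  intro m
  induction m with
  | zero =>
    intro n v
    match n with
    | 0 => exact zono_volume_zero v
    | n' + 1 => exact zono_volume_deg (Nat.succ_pos n') v
  | succ m IH =>
    intro n v
    match n with
    | 0 => exact zono_volume_zero v
    | n' + 1 =>
      classical
      set w := v (Fin.last m) with hw
      set u : Fin m → Fin (n' + 1) → ℝ := v ∘ Fin.castSucc with hu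
      have hdecomp : zono v = {x | ∃ a ∈ zono u, ∃ t ∈ Set.Icc (0:ℝ) 1, x = a + t • w} := by
        ext x
        simp only [zono, Set.mem_setOf_eq]
        constructor
        · rintro ⟨c, hc, rfl⟩
          refine ⟨∑ i, c (Fin.castSucc i) • u i, ⟨fun i => c (Fin.castSucc i), fun i => hc _, rfl⟩,
            c (Fin.last m), hc _, ?_⟩
          rw [Fin.sum_univ_castSucc]
          rfl
        · rintro ⟨a, ⟨c, hc, rfl⟩, t, ht, rfl⟩
          refine ⟨Fin.snoc c t, fun i => ?_, ?_⟩
          · induction i using Fin.lastCases with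
            | last => simpa [Fin.snoc_last] using ht
            | cast i => simpa [Fin.snoc_castSucc] using hc i
          · rw [Fin.sum_univ_castSucc]
            simp only [Fin.snoc_castSucc, Fin.snoc_last, hu, hw, Function.comp_apply]
      by_cases hw0 : w = 0
      · have hzeq : zono v = zono u := by
          rw [hdecomp]
          ext x
          constructor
          · rintro ⟨a, ha, t, ht, rfl⟩; simpa [hw0] using ha
          · intro ha; exact ⟨x, ha, 0, ⟨le_refl _, zero_le_one⟩, by simp [hw0]⟩
        have hzero : ∀ t ∈ (Finset.univ : Finset (Fin m)).powersetCard n',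
            ENNReal.ofReal (dAbs' u w t) = 0 := by
          intro t ht
          have htc : t.card = n' := (Finset.mem_powersetCard.mp ht).2
          rw [dAbs', dif_pos htc]
          rw [Matrix.det_eq_zero_of_column_eq_zero (Fin.last n') ?_]
          · simp
          · intro i
            simp [Fin.snoc_last, hw0]
        rw [hzeq, IH _ u, minorSum_split v, Finset.sum_congr rfl hzero]
        simp [hu]
      · -- w ≠ 0
        have hsingle_ne : (Pi.single (Fin.last n') 1 : Fin (n'+1) → ℝ) ≠ 0 := by
          intro h
          have := congrFun h (Fin.last n')
          simp at this
        obtain ⟨Tc, hTc⟩ := SeparatingDual.exists_continuousLinearEquiv_apply_eq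
          (R := ℝ) hw0 hsingle_ne
        set T : (Fin (n' + 1) → ℝ) ≃ₗ[ℝ] (Fin (n' + 1) → ℝ) := Tc.toLinearEquiv with hT
        set TL : (Fin (n' + 1) → ℝ) →ₗ[ℝ] (Fin (n' + 1) → ℝ) := T.toLinearMap with hTL
        have hTw : T w = (Pi.single (Fin.last n') 1 : Fin (n'+1) → ℝ) := hTc
        have hdet_ne : LinearMap.det TL ≠ 0 := (LinearEquiv.isUnit_det' T).ne_zero
        set D := |LinearMap.det TL| with hD
        have hDpos : (0:ℝ) < D := abs_pos.mpr hdet_ne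
        have himg : ∀ S : Set (Fin (n' + 1) → ℝ),
            volume (TL '' S) = ENNReal.ofReal D * volume S := fun S => by
          rw [Measure.addHaar_image_linearMap, hD]
        have hofD0 : ENNReal.ofReal D ≠ 0 := by
          simp [ENNReal.ofReal_eq_zero, not_le, hDpos]
        have hofDtop : ENNReal.ofReal D ≠ ⊤ := ENNReal.ofReal_ne_top
        -- image of the decomposition under TL
        have h1 : TL '' zono v = {x | ∃ a ∈ zono (fun i => TL (u i)), ∃ t ∈ Set.Icc (0:ℝ) 1,
            x = a + t • (Pi.single (Fin.last n') (1:ℝ) : Fin (n'+1) → ℝ)} := by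
          rw [hdecomp, ← zono_image u TL]
          ext x
          simp only [Set.mem_image, Set.mem_setOf_eq]
          constructor
          · rintro ⟨y, ⟨a, ha, t, ht, rfl⟩, rfl⟩
            refine ⟨TL a, ⟨a, ha, rfl⟩, t, ht, ?_⟩
            rw [map_add, LinearMap.map_smul]
            show TL a + t • T w = TL a + t • _
            rw [hTw]
          · rintro ⟨x', ⟨a, ha, rfl⟩, t, ht, rfl⟩
            refine ⟨a + t • w, ⟨a, ha, t, ht, rfl⟩, ?_⟩
            rw [map_add, LinearMap.map_smul]
            show TL a + t • T w = TL a + t • _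
            rw [hTw]
        set projL : (Fin (n' + 1) → ℝ) →ₗ[ℝ] (Fin n' → ℝ) := LinearMap.funLeft ℝ ℝ Fin.castSucc
          with hprojL
        have hprojset : (fun x : Fin (n' + 1) → ℝ => x ∘ Fin.castSucc) '' zono (fun i => TL (u i))
            = zono (fun i => projL (TL (u i))) := by
          rw [← zono_image (fun i => TL (u i)) projL]
          rfl
        have h2 := vol_add_seg (zono (fun i => TL (u i))) (zono_isCompact _) (zono_convex _)
        rw [hprojset] at h2
        -- determinant identity for the projected zonotope
        have hproj_minor : minorSum n' (fun i => projL (TL (u i)))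
            = ENNReal.ofReal D * ∑ t ∈ (Finset.univ : Finset (Fin m)).powersetCard n',
                ENNReal.ofReal (dAbs' u w t) := by
          rw [minorSum, Finset.mul_sum]
          refine Finset.sum_congr rfl fun t ht => ?_
          have htc : t.card = n' := (Finset.mem_powersetCard.mp ht).2
          have : dAbs (fun i => projL (TL (u i))) t = dAbs (fun i => (T (u i)) ∘ Fin.castSucc) t := rfl
          rw [this, dAbs_proj u w T hTw t htc, ← hD,
            ENNReal.ofReal_mul (le_of_lt hDpos)]
        -- main computation
        have hmain : ENNReal.ofReal D * volume (zono v)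
            = ENNReal.ofReal D * minorSum (n' + 1) v := by
          calc ENNReal.ofReal D * volume (zono v)
              = volume (TL '' zono v) := (himg _).symm
            _ = volume (zono (fun i => TL (u i)))
                + volume (zono (fun i => projL (TL (u i)))) := by rw [h1, h2]
            _ = volume (TL '' zono u) + minorSum n' (fun i => projL (TL (u i))) := by
                rw [zono_image u TL, IH n' (fun i => projL (TL (u i)))]
            _ = ENNReal.ofReal D * minorSum (n' + 1) u
                + ENNReal.ofReal D * ∑ t ∈ (Finset.univ : Finset (Fin m)).powersetCard n',
                    ENNReal.ofReal (dAbs' u w t) := by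
                rw [himg, IH (n' + 1) u, hproj_minor]
            _ = ENNReal.ofReal D * minorSum (n' + 1) v := by
                rw [← mul_add, minorSum_split v]
        exact (ENNReal.mul_right_inj hofD0 hofDtop).mp hmain


end ZonoAux

theorem zonotope_volume (n m : ℕ) (hnm : n ≤ m)
    (Z : Matrix (Fin n) (Fin m) ℝ) (hrank : Z.rank = n) :
    MeasureTheory.volume
        {x : Fin n → ℝ | ∃ c : Fin m → ℝ, (∀ i, c i ∈ Set.Icc (0 : ℝ) 1) ∧
          x = fun q => ∑ i : Fin m, c i * Z q i} =
      ENNReal.ofReal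
        (∑ s ∈ ((Finset.univ : Finset (Fin m)).powersetCard n).attach,
          |Matrix.det (Matrix.of fun i j : Fin n =>
            Z i ((s.1.orderIsoOfFin (Finset.mem_powersetCard.mp s.2).2 j : Fin m)))|) := by
  have hset : {x : Fin n → ℝ | ∃ c : Fin m → ℝ, (∀ i, c i ∈ Set.Icc (0 : ℝ) 1) ∧
      x = fun q => ∑ i : Fin m, c i * Z q i} = zono (fun i q => Z q i) := by
    ext x
    simp only [zono, Set.mem_setOf_eq]
    refine exists_congr fun c => and_congr_right fun _ => ?_
    constructor
    · rintro rfl; funext q; simp [Finset.sum_apply]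
    · rintro rfl; funext q; simp [Finset.sum_apply]
  rw [hset, zono_volume_main m n (fun i q => Z q i),
    ENNReal.ofReal_sum_of_nonneg ?_]
  · rw [minorSum, ← Finset.sum_attach ((Finset.univ : Finset (Fin m)).powersetCard n)
      (fun s => ENNReal.ofReal (dAbs (fun i q => Z q i) s))]
    refine Finset.sum_congr rfl fun s _ => ?_
    congr 1
    rw [dAbs, dif_pos (Finset.mem_powersetCard.mp s.2).2]
  · exact fun s _ => abs_nonneg _
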